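/- For every positive integer n, (2n−1)!! < (2n)!!/√(πn); equivalently, √(πn) · (1·3·5⋯(2n−1)) < 2^n · n!. -/

import Mathlib

/-- `(2k-1)!! = 1 * 3 * 5 * ... * (2k-1)`, with `(-1)!! = 1`. -/
def oddFactorial : ℕ → ℕ
  | 0 => 1
  | k + 1 => (2 * k + 1) * oddFactorial k

open Real Stirling Nat Filter in
theorem oddFactorial_mul_eq (n : ℕ) : oddFactorial n * (2 ^ n * n !) = (2 * n)! := by
  induction n with
  | zero => simp [oddFactorial]
  | succ k ih =>
    have h2 : (2*(k+1))! = (2*k+2)*((2*k+1)*(2*k)!) := by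
      rw [show 2*(k+1) = 2*k+1+1 by ring, Nat.factorial_succ, Nat.factorial_succ]
    rw [h2, ← ih, oddFactorial, Nat.factorial_succ]
    ring

open Real Stirling Nat Filter in
theorem sqrt_pi_le_stirlingSeq' (k : ℕ) : Real.sqrt π ≤ stirlingSeq (k+1) :=
  stirlingSeq'_antitone.le_of_tendsto
    (tendsto_stirlingSeq_sqrt_pi.comp (tendsto_add_atTop_nat 1)) k

open Real Stirling Nat Filter in
theorem stirlingSeq_strict_anti (m : ℕ) : stirlingSeq (m+2) < stirlingSeq (m+1) := by
  have h := log_stirlingSeq_diff_hasSum m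
  have h0 : (0:ℝ) < (1 : ℝ) / (2 * ((0:ℕ) + 1 : ℕ) + 1) *
      ((1 / (2 * ↑(m + 1) + 1)) ^ 2) ^ ((0:ℕ) + 1 : ℕ) := by positivity
  have hle := le_hasSum h 0 (fun j _ => by positivity)
  have hlt : Real.log (stirlingSeq (m+2)) < Real.log (stirlingSeq (m+1)) := by linarith
  calc stirlingSeq (m+2) = Real.exp (Real.log (stirlingSeq (m+2))) :=
        (Real.exp_log (stirlingSeq'_pos _)).symm
    _ < Real.exp (Real.log (stirlingSeq (m+1))) := Real.exp_lt_exp.2 hlt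
    _ = stirlingSeq (m+1) := Real.exp_log (stirlingSeq'_pos _)

open Real Stirling Nat Filter in
theorem stirling_key (n : ℕ) (hn : 0 < n) :
    Real.sqrt π * stirlingSeq (2*n) < stirlingSeq n ^ 2 := by
  obtain ⟨m, rfl⟩ := Nat.exists_eq_add_of_lt hn
  simp only [zero_add] at *
  have e1 : 2 * (m + 1) = (2*m+1) + 1 := by ring
  have h1 : Real.sqrt π ≤ stirlingSeq (2*(m+1)) := by rw [e1]; exact sqrt_pi_le_stirlingSeq' _
  have h2 : stirlingSeq (2*(m+1)) ≤ stirlingSeq (m+2) := by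
    rw [e1]; exact stirlingSeq'_antitone (by omega : m + 1 ≤ 2*m+1)
  have h3 : stirlingSeq (m+2) < stirlingSeq (m+1) := stirlingSeq_strict_anti m
  have h4 : (0:ℝ) < stirlingSeq (m+2) := stirlingSeq'_pos _
  have h5 : (0:ℝ) ≤ Real.sqrt π := Real.sqrt_nonneg _
  nlinarith

open Real Stirling Nat Filter in
theorem main_ineq (n : ℕ) (hn : 0 < n) :
    Real.sqrt (π * n) * ((2*n)! : ℝ) < ((2:ℝ) ^ n * (n ! : ℝ)) ^ 2 := by
  have key := stirling_key n hn
  have hnR : (0:ℝ) < n := by exact_mod_cast hn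
  have hden : (0:ℝ) < Real.sqrt (2 * n) * ((n : ℝ) / Real.exp 1) ^ n := by positivity
  have hden2 : (0:ℝ) < Real.sqrt (2 * (2*n : ℕ)) * (((2*n : ℕ) : ℝ) / Real.exp 1) ^ (2*n) := by
    push_cast; positivity
  have hfact : (n ! : ℝ) = stirlingSeq n * (Real.sqrt (2 * n) * ((n:ℝ) / Real.exp 1) ^ n) := by
    rw [stirlingSeq, div_mul_cancel₀ _ hden.ne']
  have hfact2 : ((2*n)! : ℝ) =
      stirlingSeq (2*n) * (Real.sqrt (2 * (2*n : ℕ)) * (((2*n:ℕ):ℝ) / Real.exp 1) ^ (2*n)) := by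
    rw [stirlingSeq, div_mul_cancel₀ _ hden2.ne']
  rw [hfact, hfact2]
  have h1 : Real.sqrt (π * n) = Real.sqrt π * Real.sqrt n := Real.sqrt_mul pi_pos.le _
  have h2 : Real.sqrt (2 * ((2*n : ℕ) : ℝ)) = 2 * Real.sqrt n := by
    push_cast
    rw [show (2:ℝ) * (2 * n) = 2^2 * n by ring, Real.sqrt_mul (by positivity),
      Real.sqrt_sq (by norm_num)]
  have h3 : Real.sqrt (2 * (n:ℝ)) = Real.sqrt 2 * Real.sqrt n := Real.sqrt_mul (by norm_num) _
  have h4 : (((2*n:ℕ):ℝ) / Real.exp 1) ^ (2*n) = 4 ^ n * ((n:ℝ) / Real.exp 1) ^ (2*n) := by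
    push_cast
    rw [show (2:ℝ) * n / Real.exp 1 = 2 * ((n:ℝ)/Real.exp 1) by ring, mul_pow, pow_mul]
    norm_num
  have hs : Real.sqrt (n:ℝ) ^ 2 = n := Real.sq_sqrt hnR.le
  have hs2 : Real.sqrt 2 ^ 2 = 2 := Real.sq_sqrt (by norm_num)
  have hC : (0:ℝ) < 2 * n * 4 ^ n * ((n:ℝ)/Real.exp 1) ^ (2*n) := by positivity
  have hkey := mul_lt_mul_of_pos_right key hC
  calc Real.sqrt (π * n) *
        (stirlingSeq (2*n) * (Real.sqrt (2 * ((2*n:ℕ):ℝ)) * (((2*n:ℕ):ℝ) / Real.exp 1) ^ (2*n)))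
      = Real.sqrt π * stirlingSeq (2*n) * (2 * n * 4 ^ n * ((n:ℝ)/Real.exp 1) ^ (2*n)) := by
        rw [h1, h2, h4]; ring_nf; rw [hs]; ring
    _ < stirlingSeq n ^ 2 * (2 * n * 4 ^ n * ((n:ℝ)/Real.exp 1) ^ (2*n)) := hkey
    _ = ((2:ℝ) ^ n * (stirlingSeq n * (Real.sqrt (2 * n) * ((n:ℝ) / Real.exp 1) ^ n))) ^ 2 := by
        rw [h3]
        rw [show (4:ℝ)^n = 2^n * 2^n by rw [← mul_pow]; norm_num,
          show (2*n) = n + n from two_mul n, pow_add]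
        ring_nf
        rw [hs, hs2]; ring

theorem doubleFactorial_lt (n : ℕ) (hn : 0 < n) :
    Real.sqrt (Real.pi * n) * (oddFactorial n : ℝ) < (2 : ℝ) ^ n * (n.factorial : ℝ) := by
  have hpos : (0:ℝ) < (2:ℝ) ^ n * (n.factorial : ℝ) := by positivity
  rw [← mul_lt_mul_iff_left₀ hpos]
  have hcast : (oddFactorial n : ℝ) * ((2:ℝ) ^ n * (n.factorial : ℝ)) = ((2*n).factorial : ℝ) := by
    exact_mod_cast congrArg (Nat.cast (R := ℝ)) (oddFactorial_mul_eq n)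
  calc Real.sqrt (Real.pi * n) * (oddFactorial n : ℝ) * ((2:ℝ) ^ n * (n.factorial : ℝ))
      = Real.sqrt (Real.pi * n) * ((2*n).factorial : ℝ) := by rw [mul_assoc, hcast]
    _ < ((2:ℝ) ^ n * (n.factorial : ℝ)) ^ 2 := main_ineq n hn
    _ = (2:ℝ) ^ n * (n.factorial : ℝ) * ((2:ℝ) ^ n * (n.factorial : ℝ)) := sq _
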